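/- If δ > 1/k̄, then the 3×3 real matrix M = [[−1, k1·δ, 0], [0, k̄·δ − (δ+1), 1], [0, 2δ, −2]] has a real, strictly positive eigenvalue. (Hence the disease-free equilibrium of the super compact pairwise SIS model is unstable above the epidemic threshold δc = k1/(k2 − k1) = 1/k̄.) -/
import Mathlib


/-- If δ > 1/k̄, then M = [[−1, k1·δ, 0], [0, k̄·δ − (δ+1), 1], [0, 2δ, −2]]
has a real, strictly positive eigenvalue (a positive real root of its characteristic
polynomial), where k̄ = (k2 − k1)/k1 with 0 < k1 < k2 (instability of the disease-free
equilibrium above the epidemic threshold δc = 1/k̄). -/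
theorem scpw_dfe_unstable_above_threshold (k1 k2 δ : ℝ) (hk1 : 0 < k1) (hk12 : k1 < k2)
    (hδgt : δ > 1 / ((k2 - k1) / k1)) :
    ∃ r : ℝ, 0 < r ∧
      (Matrix.of ![![(-1 : ℝ), k1 * δ, 0],
          ![0, ((k2 - k1) / k1) * δ - (δ + 1), 1],
          ![0, 2 * δ, -2]]).charpoly.IsRoot r := by
  set kb : ℝ := (k2 - k1) / k1 with hkb
  have hkbpos : 0 < kb := div_pos (by linarith) hk1
  have hkd : 1 < kb * δ := by
    have := (div_lt_iff₀ hkbpos).mp hδgt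
    -- δ > 1/kb ⇒ 1 < kb*δ
    rw [gt_iff_lt, div_lt_iff₀ hkbpos] at hδgt
    linarith [hδgt]
  set a : ℝ := kb * δ - (δ + 1) with ha
  set c : ℝ := 2 * a + 2 * δ with hc
  have hcpos : 0 < c := by simp only [hc, ha]; linarith
  set s : ℝ := Real.sqrt ((a - 2) ^ 2 + 4 * c) with hs
  have hs2 : s ^ 2 = (a - 2) ^ 2 + 4 * c :=
    Real.sq_sqrt (by positivity)
  have hsnn : 0 ≤ s := Real.sqrt_nonneg _
  refine ⟨((a - 2) + s) / 2, ?_, ?_⟩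
  · nlinarith [hs2, hsnn, hcpos]
  · show Polynomial.eval _ _ = 0
    rw [Matrix.charpoly, ← Polynomial.coe_evalRingHom, RingHom.map_det]
    simp [Matrix.det_fin_three, Matrix.charmatrix_apply, Matrix.vecHead, Matrix.vecTail]
    linear_combination ((a - 2 + s) / 2 + 1) / 4 * hs2 + ((a - 2 + s) / 2 + 1) * hc
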